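/- With the percolating flow u(x₁,x₂) = (Ũ'(y), p'(x₁)Ũ'(y)), y = {p(x₁) − x₂}, on 𝕋²: if ψ ∈ H¹(𝕋²) satisfies u·∇ψ = iλψ with λ ≠ 0, and ψ is of the form ψ(x₁,x₂) = e^{iλ x₁/Ũ'(y)} θ(y) on the set where Ũ'(y) ≠ 0 with ψ = 0 where Ũ' = 0, then λ/Ũ'(y) ∈ 2πℤ for every y with θ(y) ≠ 0; consequently, if Ũ' has no non-trivial plateau on which it is a non-zero constant, then u has no H¹(𝕋²) eigenfunctions with non-zero eigenvalue. -/

import Mathlib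

open MeasureTheory

/-- Example 6.3 (rigidity of eigenfunctions of percolating flows): if an `H¹(𝕋²)`
eigenfunction `ψ` of `u = (Ũ'(y), p'(x₁)Ũ'(y))`, `y = p(x₁) - x₂`, with eigenvalue
`iλ ≠ 0` has the form `ψ = e^{iλx₁/Ũ'(y)}θ(y)` where `Ũ'(y) ≠ 0` and `ψ = 0` where
`Ũ'(y) = 0`, then `λ/Ũ'(y) ∈ 2πℤ` wherever `θ(y) ≠ 0` and `Ũ'(y) ≠ 0`; consequently, if
`Ũ'` has no plateau on which it is a non-zero constant, no such eigenfunction exists. -/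
theorem stmt_15 (p U : ℝ → ℝ)
    (hp : ContDiff ℝ 1 p) (hpper : Function.Periodic p 1)
    (hU : ContDiff ℝ 1 U) (hUper : Function.Periodic U 1)
    (u : ℝ × ℝ → ℝ × ℝ)
    (hu : ∀ x : ℝ × ℝ, u x = (deriv U (p x.1 - x.2), deriv p x.1 * deriv U (p x.1 - x.2)))
    (lam : ℝ) (hlam : lam ≠ 0)
    (ψ : ℝ × ℝ → ℂ) (θ : ℝ → ℂ)
    (hψper1 : ∀ x₁ x₂ : ℝ, ψ (x₁ + 1, x₂) = ψ (x₁, x₂))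
    (hψper2 : ∀ x₁ x₂ : ℝ, ψ (x₁, x₂ + 1) = ψ (x₁, x₂))
    (hψdiff : ∀ᵐ x : ℝ × ℝ, DifferentiableAt ℝ ψ x)
    (hψL2 : MemLp ψ 2 (volume.restrict (Set.Ico (0 : ℝ) 1 ×ˢ Set.Ico (0 : ℝ) 1)))
    (hψH1 : MemLp (fun x => ‖fderiv ℝ ψ x‖) 2
      (volume.restrict (Set.Ico (0 : ℝ) 1 ×ˢ Set.Ico (0 : ℝ) 1)))
    (heig : ∀ᵐ x : ℝ × ℝ, fderiv ℝ ψ x (u x) = (Complex.I * lam) • ψ x)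
    (hψ0 : ¬ (∀ᵐ x : ℝ × ℝ, ψ x = 0))
    (hform : ∀ x : ℝ × ℝ,
      (deriv U (p x.1 - x.2) ≠ 0 →
        ψ x = Complex.exp (Complex.I * lam * x.1 / Complex.ofReal (deriv U (p x.1 - x.2))) *
          θ (p x.1 - x.2)) ∧
      (deriv U (p x.1 - x.2) = 0 → ψ x = 0)) :
    (∀ y : ℝ, θ y ≠ 0 → deriv U y ≠ 0 →
      ∃ m : ℤ, lam = 2 * Real.pi * m * deriv U y) ∧
    ((¬ ∃ a b : ℝ, a < b ∧ ∃ C : ℝ, C ≠ 0 ∧ ∀ s ∈ Set.Icc a b, deriv U s = C) → False) := by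
  have hcont : Continuous (deriv U) := hU.continuous_deriv le_rfl
  have key : ∀ y : ℝ, θ y ≠ 0 → deriv U y ≠ 0 →
      ∃ m : ℤ, lam = 2 * Real.pi * m * deriv U y := by
    intro y hθ hU'
    have h0 := (hform (0, p 0 - y)).1
    have h1 := (hform (1, p 0 - y)).1
    have hp1 : p (1:ℝ) = p 0 := by simpa using hpper 0
    simp only [hp1] at h1
    have hy0 : p (0:ℝ) - (p 0 - y) = y := by ring
    simp only [hy0] at h0 h1
    have hper := hψper1 0 (p 0 - y)
    norm_num at hper
    rw [h0 hU', h1 hU'] at hper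
    have hexp : Complex.exp (Complex.I * lam * 1 / Complex.ofReal (deriv U y)) = 1 := by
      have := mul_right_cancel₀ hθ hper
      simpa using this
    rw [Complex.exp_eq_one_iff] at hexp
    obtain ⟨n, hn⟩ := hexp
    refine ⟨n, ?_⟩
    have hc : (Complex.ofReal (deriv U y)) ≠ 0 := by exact_mod_cast hU'
    have hI : (Complex.I : ℂ) ≠ 0 := Complex.I_ne_zero
    have : (lam : ℂ) = 2 * Real.pi * n * Complex.ofReal (deriv U y) := by
      field_simp at hn
      have h2 : Complex.I * (lam:ℂ) = n * (2 * Real.pi * Complex.I) * Complex.ofReal (deriv U y) := by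
        linear_combination Complex.I * hn
      have := mul_left_cancel₀ hI (by linear_combination h2 : Complex.I * (lam : ℂ)
        = Complex.I * (2 * Real.pi * n * Complex.ofReal (deriv U y)))
      exact this
    exact_mod_cast this
  refine ⟨key, ?_⟩
  intro hnopl
  apply hnopl
  -- find a point where ψ is nonzero and differentiable
  have hx : ∃ x : ℝ × ℝ, DifferentiableAt ℝ ψ x ∧ ψ x ≠ 0 := by
    by_contra h
    push_neg at h
    exact hψ0 (hψdiff.mono fun x hd => h x hd)
  obtain ⟨x₀, hd₀, hne₀⟩ := hx
  have hca : ContinuousAt ψ x₀ := hd₀.continuousAt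
  have hev : ∀ᶠ x in nhds x₀, ψ x ≠ 0 := hca.eventually_ne hne₀
  rw [Metric.eventually_nhds_iff] at hev
  obtain ⟨ε, hε, hball⟩ := hev
  set y₀ := p x₀.1 - x₀.2 with hy₀
  have hgood : ∀ s ∈ Set.Icc (y₀ - ε/2) (y₀ + ε/2), θ s ≠ 0 ∧ deriv U s ≠ 0 := by
    intro s hs
    have hdist : dist ((x₀.1, p x₀.1 - s) : ℝ × ℝ) x₀ < ε := by
      have h1 : dist (p x₀.1 - s) x₀.2 ≤ ε/2 := by
        rw [Real.dist_eq]
        have := hs.1; have := hs.2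
        rw [abs_le]; constructor <;> [linarith; linarith]
      calc dist ((x₀.1, p x₀.1 - s) : ℝ × ℝ) x₀
          = max (dist x₀.1 x₀.1) (dist (p x₀.1 - s) x₀.2) := by
            rw [Prod.dist_eq]
        _ ≤ ε/2 := max_le (by simp; linarith) h1
        _ < ε := by linarith
    have hψne : ψ (x₀.1, p x₀.1 - s) ≠ 0 := hball hdist
    have hform' := hform (x₀.1, p x₀.1 - s)
    have hys : p (x₀.1, p x₀.1 - s).1 - (x₀.1, p x₀.1 - s).2 = s := by simp
    rw [hys] at hform'
    have hU's : deriv U s ≠ 0 := fun h => hψne (hform'.2 h)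
    refine ⟨fun hθ0 => hψne ?_, hU's⟩
    rw [hform'.1 hU's, hθ0, mul_zero]
  -- deriv U takes values in a countable set on this interval
  set T : Set ℝ := Set.range (fun m : ℤ => lam / (2 * Real.pi * m)) with hT
  have hmem : ∀ s ∈ Set.Icc (y₀ - ε/2) (y₀ + ε/2), deriv U s ∈ T := by
    intro s hs
    obtain ⟨hθs, hU's⟩ := hgood s hs
    obtain ⟨m, hm⟩ := key s hθs hU's
    refine ⟨m, ?_⟩
    have h2πm : (2 * Real.pi * m : ℝ) ≠ 0 := by
      intro h
      rw [h, zero_mul] at hm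
      exact hlam hm
    show lam / (2 * Real.pi * m) = deriv U s
    rw [hm, mul_div_cancel_left₀ _ h2πm]
  have hy₀mem : y₀ ∈ Set.Icc (y₀ - ε/2) (y₀ + ε/2) := by
    constructor <;> [linarith; linarith]
  have hU'y₀ : deriv U y₀ ≠ 0 := (hgood y₀ hy₀mem).2
  refine ⟨y₀ - ε/2, y₀ + ε/2, by linarith, deriv U y₀, hU'y₀, ?_⟩
  intro s hs
  by_contra hne
  have hsub : Set.uIcc s y₀ ⊆ Set.Icc (y₀ - ε/2) (y₀ + ε/2) :=
    Set.uIcc_subset_Icc hs hy₀mem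
  have himage : Set.uIcc (deriv U s) (deriv U y₀) ⊆ T := by
    have hiv : Set.uIcc (deriv U s) (deriv U y₀) ⊆ deriv U '' Set.uIcc s y₀ :=
      intermediate_value_uIcc (hcont.continuousOn)
    intro t ht
    obtain ⟨r, hr, hrt⟩ := hiv ht
    exact hrt ▸ hmem r (hsub hr)
  have hTc : T.Countable := Set.countable_range _
  have h0 : volume (Set.uIcc (deriv U s) (deriv U y₀)) = 0 :=
    measure_mono_null himage (hTc.measure_zero _)
  rw [Set.uIcc, Real.volume_Icc] at h0
  have hlt : (deriv U s) ⊓ (deriv U y₀) < (deriv U s) ⊔ (deriv U y₀) :=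
    min_lt_max.mpr hne
  simp only [ENNReal.ofReal_eq_zero] at h0
  linarith
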